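/- Let p1 and p2 be real polynomials that are not both zero, with degrees d1 and d2 respectively (using the convention that the degree of the zero polynomial is −1), and let c be a nonzero real number. Then the function f(x) = p1(x)·exp(c·x) + p2(x)·exp(−c·x) has at most d1 + d2 + 1 real zeros; that is, the set {x ∈ ℝ : f(x) = 0} is finite with cardinality at most d1 + d2 + 1. -/

import Mathlib

open Polynomial

lemma poly_zero_set (p : Polynomial ℝ) (hp : p ≠ 0) :
    {x : ℝ | p.eval x = 0}.Finite ∧ {x : ℝ | p.eval x = 0}.ncard ≤ p.natDegree := by
  have hset : {x : ℝ | p.eval x = 0} = ↑p.roots.toFinset := by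
    ext x
    simp [Polynomial.mem_roots, hp, Polynomial.IsRoot]
  rw [hset]
  refine ⟨(p.roots.toFinset : Set ℝ).toFinite, ?_⟩
  rw [Set.ncard_coe_finset]
  exact le_trans (Multiset.toFinset_card_le _) (p.card_roots' )

lemma rolle_finset_card (h : ℝ → ℝ) (hd : Differentiable ℝ h)
    (hT : {x : ℝ | deriv h x = 0}.Finite)
    (s : Finset ℝ) (hs : ∀ x ∈ s, h x = 0) :
    s.card ≤ {x : ℝ | deriv h x = 0}.ncard + 1 := by
  rcases Nat.lt_or_ge s.card 2 with h2 | h2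
  · omega
  obtain ⟨m, hm⟩ : ∃ m, s.card = m + 1 := ⟨s.card - 1, by omega⟩
  have hm1 : 1 ≤ m := by omega
  set e := s.orderEmbOfFin hm with he
  have hmem : ∀ i, (e i) ∈ s := fun i => s.orderEmbOfFin_mem hm i
  have key : ∀ i : Fin m, ∃ t ∈ Set.Ioo (e i.castSucc) (e i.succ), deriv h t = 0 := by
    intro i
    have hab : e i.castSucc < e i.succ := by
      apply e.strictMono
      exact Fin.castSucc_lt_succ
    exact exists_deriv_eq_zero hab (hd.continuous.continuousOn)
      (by rw [hs _ (hmem _), hs _ (hmem _)])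
  choose t ht1 ht2 using key
  have tmono : StrictMono t := by
    intro i j hij
    have h1 : (t i) < e i.succ := (ht1 i).2
    have h2 : e j.castSucc < t j := (ht1 j).1
    have h3 : e i.succ ≤ e j.castSucc := by
      apply e.monotone
      rw [Fin.le_def]
      simp only [Fin.val_succ, Fin.coe_castSucc]
      exact hij
    linarith
  have himg : (Finset.univ.image t) ⊆ hT.toFinset := by
    intro x hx
    simp only [Finset.mem_image] at hx
    obtain ⟨i, _, rfl⟩ := hx
    simpa using ht2 i
  have : m ≤ hT.toFinset.card := by
    calc m = (Finset.univ.image t).card := by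
            rw [Finset.card_image_of_injective _ tmono.injective, Finset.card_univ, Fintype.card_fin]
      _ ≤ hT.toFinset.card := Finset.card_le_card himg
  rw [Set.ncard_eq_toFinset_card _ hT]
  omega

lemma rolle_count (h : ℝ → ℝ) (hd : Differentiable ℝ h)
    (hT : {x : ℝ | deriv h x = 0}.Finite) :
    {x : ℝ | h x = 0}.Finite ∧
      {x : ℝ | h x = 0}.ncard ≤ {x : ℝ | deriv h x = 0}.ncard + 1 := by
  have hfin : {x : ℝ | h x = 0}.Finite := by
    by_contra hinf
    rw [← Set.not_infinite, not_not] at hinf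
    obtain ⟨s, hsub, hcard⟩ := hinf.exists_subset_card_eq ({x : ℝ | deriv h x = 0}.ncard + 2)
    have := rolle_finset_card h hd hT s (fun x hx => hsub hx)
    omega
  refine ⟨hfin, ?_⟩
  rw [Set.ncard_eq_toFinset_card _ hfin]
  exact rolle_finset_card h hd hT hfin.toFinset (fun x hx => by simpa using hx)



lemma exp_factor_zeros (c : ℝ) (p : Polynomial ℝ) (hp : p ≠ 0) :
    {x : ℝ | p.eval x * Real.exp (c * x) = 0}.Finite ∧
      {x : ℝ | p.eval x * Real.exp (c * x) = 0}.ncard ≤ p.natDegree := by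
  have hset : {x : ℝ | p.eval x * Real.exp (c * x) = 0} = {x : ℝ | p.eval x = 0} := by
    ext x
    simp [mul_eq_zero, Real.exp_ne_zero]
  rw [hset]
  exact poly_zero_set p hp

lemma g_hasDerivAt (c : ℝ) (p1 p2 : Polynomial ℝ) (x : ℝ) :
    HasDerivAt (fun x => p1.eval x * Real.exp (c * x) + p2.eval x)
      ((p1.derivative + C c * p1).eval x * Real.exp (c * x) + p2.derivative.eval x) x := by
  have h1 : HasDerivAt (fun x => p1.eval x) (p1.derivative.eval x) x := p1.hasDerivAt x
  have he : HasDerivAt (fun x => Real.exp (c * x)) (c * Real.exp (c * x)) x := by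
    have := (Real.hasDerivAt_exp (c * x)).comp x ((hasDerivAt_id x).const_mul c)
    exact this.congr_deriv (by simp [mul_comm])
  have := (h1.mul he).add (p2.hasDerivAt x)
  refine this.congr_deriv ?_
  simp only [eval_add, eval_mul, eval_C]
  ring

lemma q1_facts (c : ℝ) (hc : c ≠ 0) (p1 : Polynomial ℝ) (h1 : p1 ≠ 0) :
    (p1.derivative + C c * p1) ≠ 0 ∧ (p1.derivative + C c * p1).natDegree = p1.natDegree := by
  have hdeg : (C c * p1).degree = p1.degree := degree_C_mul hc
  have hlt : p1.derivative.degree < (C c * p1).degree := hdeg ▸ degree_derivative_lt h1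
  have hq : (p1.derivative + C c * p1).degree = p1.degree := by
    rw [degree_add_eq_right_of_degree_lt hlt, hdeg]
  constructor
  · intro h0
    rw [h0, degree_zero] at hq
    exact h1 (degree_eq_bot.mp hq.symm)
  · exact natDegree_eq_of_degree_eq hq

lemma rolle_step (c : ℝ) (p1 p2 : Polynomial ℝ)
    (hderiv : {x : ℝ | (p1.derivative + C c * p1).eval x * Real.exp (c * x)
        + p2.derivative.eval x = 0}.Finite) :
    {x : ℝ | p1.eval x * Real.exp (c * x) + p2.eval x = 0}.Finite ∧
      {x : ℝ | p1.eval x * Real.exp (c * x) + p2.eval x = 0}.ncard ≤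
        {x : ℝ | (p1.derivative + C c * p1).eval x * Real.exp (c * x)
          + p2.derivative.eval x = 0}.ncard + 1 := by
  set g : ℝ → ℝ := fun x => p1.eval x * Real.exp (c * x) + p2.eval x with hg
  have hdiff : Differentiable ℝ g := fun x => (g_hasDerivAt c p1 p2 x).differentiableAt
  have hde : ∀ x, deriv g x = (p1.derivative + C c * p1).eval x * Real.exp (c * x)
      + p2.derivative.eval x := fun x => (g_hasDerivAt c p1 p2 x).deriv
  have hseteq : {x : ℝ | deriv g x = 0} =
      {x : ℝ | (p1.derivative + C c * p1).eval x * Real.exp (c * x)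
        + p2.derivative.eval x = 0} := by
    ext x; simp [hde x]
  have := rolle_count g hdiff (by rw [hseteq]; exact hderiv)
  rw [hseteq] at this
  exact this

lemma key_lemma (c : ℝ) (hc : c ≠ 0) (n : ℕ) :
    ∀ p1 p2 : Polynomial ℝ, ¬(p1 = 0 ∧ p2 = 0) → p2.natDegree ≤ n →
    {x : ℝ | p1.eval x * Real.exp (c * x) + p2.eval x = 0}.Finite ∧
    ({x : ℝ | p1.eval x * Real.exp (c * x) + p2.eval x = 0}.ncard : ℤ) ≤
      (if p1 = 0 then -1 else (p1.natDegree : ℤ))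
        + (if p2 = 0 then -1 else (p2.natDegree : ℤ)) + 1 := by
  induction n with
  | zero =>
    intro p1 p2 hp hdeg
    by_cases h2 : p2 = 0
    · subst h2
      have h1 : p1 ≠ 0 := fun h => hp ⟨h, rfl⟩
      have hset : {x : ℝ | p1.eval x * Real.exp (c * x) + (0 : Polynomial ℝ).eval x = 0}
          = {x : ℝ | p1.eval x * Real.exp (c * x) = 0} := by
        ext x; simp
      rw [hset]
      obtain ⟨hf, hcard⟩ := exp_factor_zeros c p1 h1
      refine ⟨hf, ?_⟩
      simp only [h1, if_neg, if_pos]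
      push_cast
      omega
    by_cases h1 : p1 = 0
    · subst h1
      have hset : {x : ℝ | (0 : Polynomial ℝ).eval x * Real.exp (c * x) + p2.eval x = 0}
          = {x : ℝ | p2.eval x = 0} := by
        ext x; simp
      rw [hset]
      obtain ⟨hf, hcard⟩ := poly_zero_set p2 h2
      refine ⟨hf, ?_⟩
      simp only [h2, if_neg, if_pos]
      push_cast
      omega
    · -- both nonzero, p2 is a nonzero constant
      have hd2 : p2.natDegree = 0 := Nat.le_zero.mp hdeg
      have hq2 : p2.derivative = 0 := derivative_of_natDegree_zero hd2
      obtain ⟨hq1ne, hq1deg⟩ := q1_facts c hc p1 h1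
      have hderivset : {x : ℝ | (p1.derivative + C c * p1).eval x * Real.exp (c * x)
          + p2.derivative.eval x = 0}
          = {x : ℝ | (p1.derivative + C c * p1).eval x * Real.exp (c * x) = 0} := by
        ext x; simp [hq2]
      obtain ⟨hf0, hcard0⟩ := exp_factor_zeros c (p1.derivative + C c * p1) hq1ne
      obtain ⟨hf, hcard⟩ := rolle_step c p1 p2 (by rw [hderivset]; exact hf0)
      rw [hderivset] at hcard
      refine ⟨hf, ?_⟩
      simp only [h1, h2, if_neg, hd2]
      push_cast
      omega
  | succ n ih =>
    intro p1 p2 hp hdeg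
    rcases Nat.lt_or_ge p2.natDegree (n + 1) with hlow | hhigh
    · exact ih p1 p2 hp (by omega)
    have hd2 : p2.natDegree = n + 1 := le_antisymm hdeg hhigh
    have h2 : p2 ≠ 0 := fun h => by simp [h] at hd2
    by_cases h1 : p1 = 0
    · subst h1
      have hset : {x : ℝ | (0 : Polynomial ℝ).eval x * Real.exp (c * x) + p2.eval x = 0}
          = {x : ℝ | p2.eval x = 0} := by
        ext x; simp
      rw [hset]
      obtain ⟨hf, hcard⟩ := poly_zero_set p2 h2
      refine ⟨hf, ?_⟩
      simp only [h2, if_neg, if_pos]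
      push_cast
      omega
    · -- main step
      obtain ⟨hq1ne, hq1deg⟩ := q1_facts c hc p1 h1
      have hq2degd : p2.derivative.degree = (n : WithBot ℕ) := by
        rw [degree_derivative_eq p2 (by omega), hd2]
        simp
      have hq2ne : p2.derivative ≠ 0 := by
        intro h0
        rw [h0, degree_zero] at hq2degd
        exact WithBot.bot_ne_coe hq2degd
      have hq2deg : p2.derivative.natDegree = n := natDegree_eq_of_degree_eq_some hq2degd
      obtain ⟨hf0, hcard0⟩ := ih (p1.derivative + C c * p1) p2.derivative
        (fun h => hq1ne h.1) (le_of_eq hq2deg)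
      obtain ⟨hf, hcard⟩ := rolle_step c p1 p2 hf0
      refine ⟨hf, ?_⟩
      simp only [h1, h2, if_neg, hq1ne, hq2ne, hq1deg, hq2deg, hd2] at hcard0 ⊢
      push_cast at hcard0 ⊢
      omega

/-- Let `p1, p2` be real polynomials, not both zero, with degrees `d1, d2`
(with the convention that the degree of the zero polynomial is `-1`), and let `c ≠ 0`.
Then `f x = p1(x) * exp (c x) + p2(x) * exp (-c x)` has at most `d1 + d2 + 1` real zeros. -/
theorem zeros_of_poly_exp_combination
    (p1 p2 : Polynomial ℝ) (hp : ¬(p1 = 0 ∧ p2 = 0))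
    (c : ℝ) (hc : c ≠ 0)
    (d1 d2 : ℤ)
    (hd1 : d1 = if p1 = 0 then -1 else (p1.natDegree : ℤ))
    (hd2 : d2 = if p2 = 0 then -1 else (p2.natDegree : ℤ))
    (f : ℝ → ℝ)
    (hf : ∀ x, f x = p1.eval x * Real.exp (c * x) + p2.eval x * Real.exp (-(c * x))) :
    {x : ℝ | f x = 0}.Finite ∧ ({x : ℝ | f x = 0}.ncard : ℤ) ≤ d1 + d2 + 1 := by
  have hset : {x : ℝ | f x = 0}
      = {x : ℝ | p1.eval x * Real.exp ((2 * c) * x) + p2.eval x = 0} := by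
    ext x
    simp only [Set.mem_setOf_eq, hf x]
    constructor
    · intro h
      have := congrArg (fun y => y * Real.exp (c * x)) h
      simp only [zero_mul, add_mul] at this
      rw [mul_assoc, mul_assoc, ← Real.exp_add, ← Real.exp_add] at this
      convert this using 3
      · ring
      · simp
    · intro h
      have := congrArg (fun y => y * Real.exp (-(c * x))) h
      simp only [zero_mul, add_mul] at this
      rw [mul_assoc, ← Real.exp_add] at this
      convert this using 3
      ring
  rw [hset, hd1, hd2]
  exact key_lemma (2 * c) (by simpa using hc) p2.natDegree p1 p2 hp le_rfl
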